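/- Let (W,S) be a Coxeter system acting by additive automorphisms on an abelian group V. A family (v_s)_{s∈S} of elements of V is of the form (f(s))_{s∈S} for some 1-cocycle f : W → V if and only if: (i) v_s + s·v_s = 0 for all s ∈ S, and (ii) for every pair of distinct s,t ∈ S such that the subgroup W_{{s,t}} generated by s and t is finite, Σ_{x∈W_{{s,t}}, ℓ(xs)>ℓ(x)} (−1)^{ℓ(x)} x·v_s = Σ_{x∈W_{{s,t}}, ℓ(xt)>ℓ(x)} (−1)^{ℓ(x)} x·v_t. Moreover such a 1-cocycle f is unique, and f is a 1-coboundary if and only if there exists v ∈ V with v_s = v − s·v for all s ∈ S. -/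

import Mathlib

open scoped BigOperators

set_option linter.unusedSectionVars false
namespace CocycleCriterionAux

variable {V W : Type*} [Group W] [AddCommGroup V] [DistribMulAction W V]

/-- The semidirect-product-like extension used to build cocycles. -/
structure Ext (V W : Type*) where
  fst : V
  snd : W

namespace Ext

instance : Mul (Ext V W) := ⟨fun x y => ⟨x.fst + x.snd • y.fst, x.snd * y.snd⟩⟩
instance : One (Ext V W) := ⟨⟨0, 1⟩⟩
instance : Inv (Ext V W) := ⟨fun x => ⟨-(x.snd⁻¹ • x.fst), x.snd⁻¹⟩⟩

@[simp] lemma mk_mul (a : V) (g : W) (b : V) (h : W) :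
    (Ext.mk a g) * (Ext.mk b h) = ⟨a + g • b, g * h⟩ := rfl

@[simp] lemma fst_mul (x y : Ext V W) : (x * y).fst = x.fst + x.snd • y.fst := rfl
@[simp] lemma snd_mul (x y : Ext V W) : (x * y).snd = x.snd * y.snd := rfl
@[simp] lemma fst_one : (1 : Ext V W).fst = 0 := rfl
@[simp] lemma snd_one : (1 : Ext V W).snd = 1 := rfl

lemma ext_iff' {x y : Ext V W} : x = y ↔ x.fst = y.fst ∧ x.snd = y.snd := by
  cases x; cases y; simp

instance : Group (Ext V W) where
  mul_assoc x y z := by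
    rw [ext_iff']
    simp [smul_add, mul_smul, add_assoc, mul_assoc]
  one_mul x := by rw [ext_iff']; simp
  mul_one x := by rw [ext_iff']; simp
  inv_mul_cancel x := by
    rw [ext_iff']
    constructor
    · show -(x.snd⁻¹ • x.fst) + x.snd⁻¹ • x.fst = 0
      simp
    · show x.snd⁻¹ * x.snd = 1
      simp

lemma pow_def (u : V) (g : W) (n : ℕ) :
    (Ext.mk u g) ^ n = ⟨∑ k ∈ Finset.range n, g ^ k • u, g ^ n⟩ := by
  induction n with
  | zero => rw [pow_zero, ext_iff']; simp
  | succ n ih =>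
      rw [pow_succ, ih, mk_mul]
      congr 1
      · rw [Finset.sum_range_succ]
      · rw [pow_succ]

/-- Projection to the group part, as a monoid hom. -/
def proj : Ext V W →* W where
  toFun x := x.snd
  map_one' := rfl
  map_mul' _ _ := rfl

end Ext

section Cocycle

lemma cocycle_one {f : W → V} (hf : ∀ g h : W, f (g * h) = f g + g • f h) : f 1 = 0 := by
  have h := hf 1 1
  rw [mul_one, one_smul] at h
  have : f 1 + f 1 = f 1 + 0 := by rw [add_zero, ← h]
  exact (add_left_cancel this)

variable {B : Type*} {M : CoxeterMatrix B} (cs : CoxeterSystem M W)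

lemma cocycle_unique {f g : W → V}
    (hf : ∀ x y : W, f (x * y) = f x + x • f y)
    (hg : ∀ x y : W, g (x * y) = g x + x • g y)
    (h : ∀ b : B, f (cs.simple b) = g (cs.simple b)) : f = g := by
  funext w
  exact cs.simple_induction (p := fun w => f w = g w) w h
    (by show f 1 = g 1; rw [cocycle_one hf, cocycle_one hg])
    (fun x y hx hy => by
      show f (x * y) = g (x * y)
      rw [hf, hg, show f x = g x from hx, show f y = g y from hy])

end Cocycle

section Sign

variable {B : Type*} {M : CoxeterMatrix B} (cs : CoxeterSystem M W)

def signHom : W →* ℤˣ := cs.lift ⟨fun _ => -1, fun i i' => by simp⟩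

@[simp] lemma signHom_simple (i : B) : signHom cs (cs.simple i) = -1 :=
  cs.lift_apply_simple _ i

lemma signHom_wordProd (ω : List B) :
    signHom cs (cs.wordProd ω) = (-1) ^ ω.length := by
  induction ω with
  | nil => simp [CoxeterSystem.wordProd_nil]
  | cons i ω ih =>
      rw [CoxeterSystem.wordProd_cons, map_mul, ih, signHom_simple, List.length_cons, pow_succ]
      exact (mul_comm _ _)

lemma sign_eq_signHom (w : W) :
    ((-1 : ℤ) ^ cs.length w) = ((signHom cs w : ℤˣ) : ℤ) := by
  obtain ⟨ω, hlen, rfl⟩ := cs.exists_reduced_word w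
  rw [show cs.length (cs.wordProd ω) = ω.length from hlen, signHom_wordProd]
  push_cast
  rfl

end Sign

section Length

variable {B : Type*} {M : CoxeterMatrix B} (cs : CoxeterSystem M W)

lemma mul_simple_simple (w : W) (i : B) : w * cs.simple i * cs.simple i = w := by
  rw [mul_assoc, cs.simple_mul_simple_self, mul_one]

lemma length_flip (w : W) (i : B) :
    cs.length (w * cs.simple i) = cs.length w + 1 ∨
      cs.length w = cs.length (w * cs.simple i) + 1 := by
  rcases cs.length_mul_simple w i with h | h
  · exact Or.inl h
  · exact Or.inr h.symm

lemma sign_mul_simple (w : W) (i : B) :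
    ((-1 : ℤ) ^ cs.length (w * cs.simple i)) = -((-1 : ℤ) ^ cs.length w) := by
  rcases length_flip cs w i with h | h
  · rw [h, pow_succ]; ring
  · rw [h, pow_succ]; ring

lemma descent_of_not_ascent {w : W} {i : B}
    (h : ¬ cs.length w < cs.length (w * cs.simple i)) :
    cs.length (w * cs.simple i) < cs.length w := by
  have := cs.length_mul_simple_ne w i
  omega

lemma ascent_of_descent {w : W} {i : B}
    (h : cs.length (w * cs.simple i) < cs.length w) :
    cs.length (w * cs.simple i) < cs.length (w * cs.simple i * cs.simple i) := by
  rwa [mul_simple_simple]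

lemma not_ascent_of_ascent {w : W} {i : B}
    (h : cs.length w < cs.length (w * cs.simple i)) :
    ¬ cs.length (w * cs.simple i) < cs.length (w * cs.simple i * cs.simple i) := by
  rw [mul_simple_simple]
  omega

end Length

section Transversal

variable {B : Type*} {M : CoxeterMatrix B} (cs : CoxeterSystem M W)

/-- The pair `{x, x * s}` contributes a constant value to `g` when `s • u = -u`;
summing over the ascent set equals summing over any transversal `K` of the pairing. -/
lemma finsum_ascent_eq_sum_transversal
    (D : Subgroup W) (hfin : (D : Set W).Finite)
    (i : B) (hsD : cs.simple i ∈ D)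
    (K : Finset W)
    (hKD : ∀ x ∈ K, x ∈ D)
    (hcover : ∀ x : W, x ∈ D → (x ∈ K ∨ x * cs.simple i ∈ K))
    (hdisj : ∀ x ∈ K, x * cs.simple i ∉ K)
    (u : V) (hu : cs.simple i • u = -u) :
    (∑ᶠ x ∈ {x : W | x ∈ D ∧ cs.length x < cs.length (x * cs.simple i)},
        ((-1 : ℤ) ^ cs.length x) • (x • u)) =
    ∑ x ∈ K, ((-1 : ℤ) ^ cs.length x) • (x • u) := by
  classical
  set g : W → V := fun x => ((-1 : ℤ) ^ cs.length x) • (x • u) with hg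
  have hpair : ∀ x : W, g (x * cs.simple i) = g x := by
    intro x
    show ((-1 : ℤ) ^ cs.length (x * cs.simple i)) • ((x * cs.simple i) • u)
      = ((-1 : ℤ) ^ cs.length x) • (x • u)
    rw [sign_mul_simple, mul_smul, hu, smul_neg, neg_smul, smul_neg, neg_neg]
  set A : Finset W := hfin.toFinset.filter
    (fun x => cs.length x < cs.length (x * cs.simple i)) with hA
  have hset : {x : W | x ∈ D ∧ cs.length x < cs.length (x * cs.simple i)} = ↑A := by
    ext x
    simp [hA, Set.Finite.mem_toFinset]
  rw [hset, finsum_mem_coe_finset]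
  have memA : ∀ x : W, x ∈ A ↔ (x ∈ D ∧ cs.length x < cs.length (x * cs.simple i)) := by
    intro x; simp [hA, Set.Finite.mem_toFinset]
  refine Finset.sum_nbij'
    (fun x => if x ∈ K then x else x * cs.simple i)
    (fun y => if cs.length y < cs.length (y * cs.simple i) then y else y * cs.simple i)
    ?_ ?_ ?_ ?_ ?_
  · intro a ha
    rw [memA] at ha
    by_cases h : a ∈ K
    · simpa [h]
    · rcases hcover a ha.1 with h' | h'
      · exact absurd h' h
      · simpa [h]
  · intro y hy
    by_cases h : cs.length y < cs.length (y * cs.simple i)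
    · simp only [if_pos h, memA]
      exact ⟨hKD y hy, h⟩
    · simp only [if_neg h, memA]
      refine ⟨D.mul_mem (hKD y hy) hsD, ?_⟩
      exact ascent_of_descent cs (descent_of_not_ascent cs h)
  · intro a ha
    rw [memA] at ha
    by_cases h : a ∈ K
    · simp [h, ha.2]
    · simp only [if_neg h]
      rw [if_neg (not_ascent_of_ascent cs ha.2), mul_simple_simple]
  · intro y hy
    by_cases h : cs.length y < cs.length (y * cs.simple i)
    · simp [h, hy]
    · simp only [if_neg h]
      rw [if_neg (hdisj y hy), mul_simple_simple]
  · intro a ha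
    by_cases h : a ∈ K
    · simp [h]
    · simp only [if_neg h]
      exact (hpair a).symm

/-- For a cocycle `f`, the alternating sum over the ascent set of a finite subgroup equals
minus the alternating sum of `f` over the whole subgroup (independent of the generator). -/
lemma finsum_ascent_of_cocycle
    (D : Subgroup W) (hfin : (D : Set W).Finite)
    (i : B) (hsD : cs.simple i ∈ D)
    (f : W → V) (hf : ∀ g h : W, f (g * h) = f g + g • f h) :
    (∑ᶠ x ∈ {x : W | x ∈ D ∧ cs.length x < cs.length (x * cs.simple i)},
        ((-1 : ℤ) ^ cs.length x) • (x • f (cs.simple i))) =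
    - ∑ x ∈ hfin.toFinset, ((-1 : ℤ) ^ cs.length x) • f x := by
  classical
  set F : W → V := fun x => ((-1 : ℤ) ^ cs.length x) • f x with hF
  set G : W → V := fun x => ((-1 : ℤ) ^ cs.length x) • (x • f (cs.simple i)) with hG
  set A : Finset W := hfin.toFinset.filter
    (fun x => cs.length x < cs.length (x * cs.simple i)) with hA
  have memA : ∀ x : W, x ∈ A ↔ (x ∈ D ∧ cs.length x < cs.length (x * cs.simple i)) := by
    intro x; simp [hA, Set.Finite.mem_toFinset]
  have hset : {x : W | x ∈ D ∧ cs.length x < cs.length (x * cs.simple i)} = ↑A := by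
    ext x; simp [hA, Set.Finite.mem_toFinset]
  rw [hset, finsum_mem_coe_finset]
  have hsplit : (∑ x ∈ hfin.toFinset, F x) =
      ∑ x ∈ A, F x + ∑ x ∈ hfin.toFinset.filter
        (fun x => ¬ cs.length x < cs.length (x * cs.simple i)), F x := by
    rw [hA, Finset.sum_filter_add_sum_filter_not]
  have hbij : (∑ x ∈ hfin.toFinset.filter
        (fun x => ¬ cs.length x < cs.length (x * cs.simple i)), F x) =
      ∑ x ∈ A, F (x * cs.simple i) := by
    refine Finset.sum_nbij' (fun x => x * cs.simple i) (fun x => x * cs.simple i)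
      ?_ ?_ ?_ ?_ ?_
    · intro a ha
      simp only [Finset.mem_filter, Set.Finite.mem_toFinset, SetLike.mem_coe] at ha
      rw [memA]
      exact ⟨D.mul_mem ha.1 hsD, ascent_of_descent cs (descent_of_not_ascent cs ha.2)⟩
    · intro a ha
      rw [memA] at ha
      simp only [Finset.mem_filter, Set.Finite.mem_toFinset, SetLike.mem_coe]
      exact ⟨D.mul_mem ha.1 hsD, not_ascent_of_ascent cs ha.2⟩
    · intro a _; exact mul_simple_simple cs a i
    · intro a _; exact mul_simple_simple cs a i
    · intro a _; rw [mul_simple_simple]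
  have hptwise : ∀ x : W, F x + F (x * cs.simple i) = -(G x) := by
    intro x
    show ((-1 : ℤ) ^ cs.length x) • f x
        + ((-1 : ℤ) ^ cs.length (x * cs.simple i)) • f (x * cs.simple i)
      = -(((-1 : ℤ) ^ cs.length x) • (x • f (cs.simple i)))
    rw [sign_mul_simple, hf, neg_smul, smul_add, neg_add]
    abel
  have : (∑ x ∈ hfin.toFinset, F x) = - ∑ x ∈ A, G x := by
    rw [hsplit, hbij, ← Finset.sum_add_distrib]
    rw [Finset.sum_congr rfl (fun x _ => hptwise x), Finset.sum_neg_distrib]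
  rw [show (∑ x ∈ A, G x) = - ∑ x ∈ hfin.toFinset, F x by rw [this, neg_neg]]

end Transversal

section Dihedral

variable {B : Type*} {M : CoxeterMatrix B} (cs : CoxeterSystem M W)

lemma signHom_zpowers {i i' : B} {z : W}
    (hz : z ∈ Subgroup.zpowers (cs.simple i * cs.simple i')) : signHom cs z = 1 := by
  obtain ⟨k, rfl⟩ := hz
  rw [map_zpow, map_mul, signHom_simple, signHom_simple]
  norm_num

lemma pair_main (v : B → V)
    (hi : ∀ b : B, v b + cs.simple b • v b = 0)
    (hii : ∀ b b' : B, b ≠ b' →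
        ((Subgroup.closure {cs.simple b, cs.simple b'} : Subgroup W) : Set W).Finite →
        (∑ᶠ x ∈ {x : W | x ∈ Subgroup.closure {cs.simple b, cs.simple b'} ∧
              cs.length x < cs.length (x * cs.simple b)},
            ((-1 : ℤ) ^ cs.length x) • (x • v b)) =
        (∑ᶠ x ∈ {x : W | x ∈ Subgroup.closure {cs.simple b, cs.simple b'} ∧
              cs.length x < cs.length (x * cs.simple b')},
            ((-1 : ℤ) ^ cs.length x) • (x • v b')))
    (i i' : B) (hne : i ≠ i') (hm : M i i' ≠ 0) :
    ∑ k ∈ Finset.range (M i i'),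
        (cs.simple i * cs.simple i') ^ k • (v i + cs.simple i • v i') = 0 := by
  classical
  set s : W := cs.simple i with hs
  set t : W := cs.simple i' with ht
  set c : W := s * t with hc
  have hcm : c ^ (M i i') = 1 := cs.simple_mul_simple_pow i i'
  have hdvd : orderOf c ∣ M i i' := orderOf_dvd_of_pow_eq_one hcm
  set d : ℕ := orderOf c with hd
  have hd0 : d ≠ 0 := by
    intro h
    rw [h] at hdvd
    exact hm (Nat.eq_zero_of_zero_dvd hdvd)
  have hsinv : s⁻¹ = s := cs.inv_simple i
  have htinv : t⁻¹ = t := cs.inv_simple i'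
  have hss : s * s = 1 := cs.simple_mul_simple_self i
  have hscs : s * c * s⁻¹ = c⁻¹ := by
    rw [hc, mul_inv_rev, htinv, hsinv]
    rw [show s * (s * t) * s = (s * s) * (t * s) by group, hss, one_mul]
  have hconj1 : ∀ z ∈ Subgroup.zpowers c, s * z * s⁻¹ ∈ Subgroup.zpowers c := by
    rintro _ ⟨k, rfl⟩
    rw [← conj_zpow, hscs, inv_zpow]
    exact inv_mem (Subgroup.zpow_mem_zpowers _ _)
  have hconj2 : ∀ z ∈ Subgroup.zpowers c, s⁻¹ * z * s ∈ Subgroup.zpowers c := by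
    intro z hz
    rw [hsinv]
    have := hconj1 z hz
    rwa [hsinv] at this
  -- the dihedral subgroup, described explicitly
  set H : Subgroup W :=
    { carrier := {x : W | x ∈ Subgroup.zpowers c ∨ x * s ∈ Subgroup.zpowers c},
      one_mem' := Or.inl (one_mem _),
      mul_mem' := by
        rintro a b (ha | ha) (hb | hb)
        · exact Or.inl (mul_mem ha hb)
        · exact Or.inr (by rw [show a * b * s = a * (b * s) by group]; exact mul_mem ha hb)
        · refine Or.inr ?_
          rw [show a * b * s = (a * s) * (s⁻¹ * b * s) by group]
          exact mul_mem ha (hconj2 b hb)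
        · refine Or.inl ?_
          have key : a * b * (s * s) = (a * s) * (s⁻¹ * (b * s) * s) := by group
          rw [hss, mul_one] at key
          rw [key]
          exact mul_mem ha (hconj2 _ hb)
      inv_mem' := by
        rintro a (ha | ha)
        · exact Or.inl (inv_mem ha)
        · refine Or.inr ?_
          have h2 := inv_mem (hconj1 _ ha)
          have key : (s * (a * s) * s⁻¹)⁻¹ = a⁻¹ * s⁻¹ := by group
          rw [key, hsinv] at h2
          exact h2 } with hH
  have memH : ∀ x : W, x ∈ H ↔
      (x ∈ Subgroup.zpowers c ∨ x * s ∈ Subgroup.zpowers c) := fun x => Iff.rfl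
  set D : Subgroup W := Subgroup.closure {s, t} with hD
  have hsD : s ∈ D := Subgroup.subset_closure (by simp)
  have htD : t ∈ D := Subgroup.subset_closure (by simp)
  have hcD : c ∈ D := mul_mem hsD htD
  have hzpD : Subgroup.zpowers c ≤ D := Subgroup.zpowers_le.mpr hcD
  have hDH : D = H := by
    apply le_antisymm
    · rw [hD]
      apply (Subgroup.closure_le H).mpr
      rintro x (rfl | rfl)
      · exact Or.inr (by rw [hss]; exact one_mem _)
      · refine Or.inr ?_
        have : t * s = c⁻¹ := by rw [hc, mul_inv_rev, htinv, hsinv]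
        rw [this]
        exact inv_mem (Subgroup.mem_zpowers c)
    · intro x hx
      rcases (memH x).mp hx with h | h
      · exact hzpD h
      · have : x = (x * s) * s⁻¹ := by group
        rw [this]
        exact mul_mem (hzpD h) (inv_mem hsD)
  have hzpfin : (Subgroup.zpowers c : Set W).Finite := by
    have hfo : IsOfFinOrder c := orderOf_pos_iff.mp (Nat.pos_of_ne_zero hd0)
    rw [← hfo.powers_eq_zpowers]
    exact hfo.finite_powers
  have hDfin : ((D : Subgroup W) : Set W).Finite := by
    have : ((D : Subgroup W) : Set W) ⊆
        (Subgroup.zpowers c : Set W) ∪ (fun z => z * s) '' (Subgroup.zpowers c : Set W) := by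
      intro x hx
      rcases (memH x).mp (hDH ▸ hx) with h | h
      · exact Or.inl h
      · refine Or.inr ⟨x * s, h, ?_⟩
        show x * s * s = x
        rw [mul_assoc, hss, mul_one]
    exact Set.Finite.subset (hzpfin.union (hzpfin.image _)) this
  -- explicit transversals
  set Kc : Finset W := (Finset.range d).image (fun k => c ^ k) with hKc
  set Ks : Finset W := (Finset.range d).image (fun k => c ^ k * s) with hKs
  have hzp_mem : ∀ x : W, x ∈ Subgroup.zpowers c ↔ ∃ k < d, c ^ k = x := by
    intro x
    constructor
    · rintro ⟨k, rfl⟩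
      refine ⟨(k % (d : ℤ)).toNat, ?_, ?_⟩
      · have h1 : k % (d : ℤ) < (d : ℤ) :=
          Int.emod_lt_of_pos k (by exact_mod_cast Nat.pos_of_ne_zero hd0)
        omega
      · have h0 : 0 ≤ k % (d : ℤ) :=
          Int.emod_nonneg k (by exact_mod_cast hd0)
        rw [← zpow_natCast, Int.toNat_of_nonneg h0, hd, zpow_mod_orderOf]
    · rintro ⟨k, _, rfl⟩
      exact Subgroup.npow_mem_zpowers c k
  have hmemKc : ∀ x : W, x ∈ Kc ↔ x ∈ Subgroup.zpowers c := by
    intro x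
    rw [hKc]
    simp only [Finset.mem_image, Finset.mem_range]
    rw [hzp_mem]
  have hmemKs : ∀ x : W, x ∈ Ks ↔ x * s ∈ Subgroup.zpowers c := by
    intro x
    rw [hKs]
    simp only [Finset.mem_image, Finset.mem_range]
    rw [hzp_mem]
    constructor
    · rintro ⟨k, hk, rfl⟩
      exact ⟨k, hk, by rw [mul_assoc, hss, mul_one]⟩
    · rintro ⟨k, hk, hx⟩
      refine ⟨k, hk, ?_⟩
      have : x = (x * s) * s := by rw [mul_assoc, hss, mul_one]
      rw [this, ← hx]
  have hsnotzp : s ∉ Subgroup.zpowers c := by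
    intro h
    have h1 := signHom_zpowers cs (i := i) (i' := i') h
    rw [hs, signHom_simple] at h1
    exact absurd h1 (by decide)
  -- first application : generator i, transversal Kc
  have happ1 := finsum_ascent_eq_sum_transversal cs D hDfin i
    hsD Kc
    (fun x hx => hzpD ((hmemKc x).mp hx))
    (fun x hx => by
      rcases (memH x).mp (hDH ▸ hx) with h | h
      · exact Or.inl ((hmemKc x).mpr h)
      · exact Or.inr ((hmemKc _).mpr h))
    (fun x hx hx' => by
      have h1 := (hmemKc x).mp hx
      have h2 := (hmemKc _).mp hx'
      exact hsnotzp (by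
        have heq : s = x⁻¹ * (x * s) := by group
        rw [heq]
        exact mul_mem (inv_mem h1) h2))
    (v i) (eq_neg_of_add_eq_zero_right (hi i))
  -- second application : generator i', transversal Ks
  have happ2 := finsum_ascent_eq_sum_transversal cs D hDfin i'
    htD Ks
    (fun x hx => by
      have h := (hmemKs x).mp hx
      have : x = (x * s) * s⁻¹ := by group
      rw [this]
      exact mul_mem (hzpD h) (inv_mem hsD))
    (fun x hx => by
      rcases (memH x).mp (hDH ▸ hx) with h | h
      · refine Or.inr ((hmemKs _).mpr ?_)
        have : x * cs.simple i' * s = x * (t * s) := by rw [← ht, mul_assoc]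
        rw [this, show t * s = c⁻¹ by rw [hc, mul_inv_rev, htinv, hsinv]]
        exact mul_mem h (inv_mem (Subgroup.mem_zpowers c))
      · exact Or.inl ((hmemKs x).mpr h)
    )
    (fun x hx hx' => by
      have h1 := (hmemKs x).mp hx
      have h2 := (hmemKs _).mp hx'
      have htt : t * t = 1 := cs.simple_mul_simple_self i'
      have hx_zp : x ∈ Subgroup.zpowers c := by
        have key : (x * t * s) * (s * t) = x * (t * ((s * s) * t)) := by group
        rw [hss, one_mul, htt, mul_one] at key
        rw [← key]
        exact mul_mem h2 (Subgroup.mem_zpowers c)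
      exact hsnotzp (by
        have heq : s = x⁻¹ * (x * s) := by group
        rw [heq]
        exact mul_mem (inv_mem hx_zp) h1))
    (v i') (eq_neg_of_add_eq_zero_right (hi i'))
  -- combine with the hypothesis
  have hkey := hii i i' hne hDfin
  rw [happ1, happ2] at hkey
  have hsigncp : ∀ k : ℕ, signHom cs (c ^ k) = 1 := by
    intro k
    exact signHom_zpowers cs (i := i) (i' := i') (Subgroup.npow_mem_zpowers c k)
  have hinj : ∀ x ∈ Finset.range d, ∀ y ∈ Finset.range d, c ^ x = c ^ y → x = y := by
    intro x hx y hy h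
    exact pow_injOn_Iio_orderOf (by simpa [hd] using hx) (by simpa [hd] using hy) h
  have hKcsum : (∑ x ∈ Kc, ((-1 : ℤ) ^ cs.length x) • (x • v i))
      = ∑ k ∈ Finset.range d, c ^ k • v i := by
    rw [hKc, Finset.sum_image hinj]
    refine Finset.sum_congr rfl (fun k _ => ?_)
    have hsg : ((-1 : ℤ) ^ cs.length (c ^ k)) = 1 := by
      rw [sign_eq_signHom, hsigncp k]
      simp
    rw [hsg, one_smul]
  have hinj' : ∀ x ∈ Finset.range d, ∀ y ∈ Finset.range d, c ^ x * s = c ^ y * s → x = y := by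
    intro x hx y hy h
    exact hinj x hx y hy (mul_right_cancel h)
  have hKssum : (∑ x ∈ Ks, ((-1 : ℤ) ^ cs.length x) • (x • v i'))
      = - ∑ k ∈ Finset.range d, c ^ k • (s • v i') := by
    rw [hKs, Finset.sum_image hinj']
    rw [← Finset.sum_neg_distrib]
    refine Finset.sum_congr rfl (fun k _ => ?_)
    have hsg : ((-1 : ℤ) ^ cs.length (c ^ k * s)) = -1 := by
      rw [sign_eq_signHom, map_mul, hsigncp k, hs, signHom_simple]
      simp
    rw [hsg, neg_one_zsmul, mul_smul]
  rw [hKcsum, hKssum] at hkey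
  have hzero : ∑ k ∈ Finset.range d, c ^ k • (v i + s • v i') = 0 := by
    simp only [smul_add, Finset.sum_add_distrib]
    rw [hkey]
    exact neg_add_cancel _
  obtain ⟨q, hq⟩ := hdvd
  rw [hq]
  clear hkey hKcsum hKssum happ1 happ2 hq hm hcm
  induction q with
  | zero => simp
  | succ n ihq =>
      rw [Nat.mul_succ, Finset.sum_range_add, ihq, zero_add]
      have : ∀ j : ℕ, c ^ (d * n + j) • (v i + s • v i') = c ^ (d * n) • (c ^ j • (v i + s • v i')) := by
        intro j
        rw [pow_add, mul_smul]
      rw [Finset.sum_congr rfl (fun j _ => this j), ← Finset.smul_sum, hzero, smul_zero]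

lemma main_liftable (v : B → V)
    (hi : ∀ b : B, v b + cs.simple b • v b = 0)
    (hii : ∀ b b' : B, b ≠ b' →
        ((Subgroup.closure {cs.simple b, cs.simple b'} : Subgroup W) : Set W).Finite →
        (∑ᶠ x ∈ {x : W | x ∈ Subgroup.closure {cs.simple b, cs.simple b'} ∧
              cs.length x < cs.length (x * cs.simple b)},
            ((-1 : ℤ) ^ cs.length x) • (x • v b)) =
        (∑ᶠ x ∈ {x : W | x ∈ Subgroup.closure {cs.simple b, cs.simple b'} ∧
              cs.length x < cs.length (x * cs.simple b')},
            ((-1 : ℤ) ^ cs.length x) • (x • v b'))) :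
    CoxeterMatrix.IsLiftable M (fun b => (Ext.mk (v b) (cs.simple b) : Ext V W)) := by
  intro i i'
  by_cases hd : i = i'
  · subst hd
    rw [M.diagonal i, pow_one, Ext.mk_mul, Ext.ext_iff']
    exact ⟨hi i, cs.simple_mul_simple_self i⟩
  · by_cases hm : M i i' = 0
    · rw [hm, pow_zero]
    · rw [Ext.mk_mul, Ext.pow_def, Ext.ext_iff']
      exact ⟨pair_main cs v hi hii i i' hd hm, cs.simple_mul_simple_pow i i'⟩

end Dihedral

end CocycleCriterionAux

open scoped BigOperators

/-- Let `(W,S)` be a Coxeter system acting by additive automorphisms on an abelian group `V`,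
and let `(v_s)_{s∈S}` be a family of elements of `V`.  Then:
(1) there is a 1-cocycle `f : W → V` with `f(s) = v_s` for all `s ∈ S` iff
    `v_s + s·v_s = 0` for all `s`, and for all distinct `s,t` generating a finite subgroup,
    `Σ_{x, ℓ(xs)>ℓ(x)} (-1)^{ℓ(x)} x·v_s = Σ_{x, ℓ(xt)>ℓ(x)} (-1)^{ℓ(x)} x·v_t`;
(2) such a 1-cocycle is unique;
(3) such a 1-cocycle is a 1-coboundary iff there is `m ∈ V` with `v_s = m - s·m` for all `s`. -/
theorem cocycle_extension_criterion
    {B : Type*} {W : Type*} [Group W] {M : CoxeterMatrix B} (cs : CoxeterSystem M W)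
    {V : Type*} [AddCommGroup V] [DistribMulAction W V] (v : B → V) :
    ((∃ f : W → V, (∀ g h : W, f (g * h) = f g + g • f h) ∧
        ∀ b : B, f (cs.simple b) = v b) ↔
      ((∀ b : B, v b + cs.simple b • v b = 0) ∧
       (∀ b b' : B, b ≠ b' →
        ((Subgroup.closure {cs.simple b, cs.simple b'} : Subgroup W) : Set W).Finite →
        (∑ᶠ x ∈ {x : W | x ∈ Subgroup.closure {cs.simple b, cs.simple b'} ∧
              cs.length x < cs.length (x * cs.simple b)},
            ((-1 : ℤ) ^ cs.length x) • (x • v b)) =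
        (∑ᶠ x ∈ {x : W | x ∈ Subgroup.closure {cs.simple b, cs.simple b'} ∧
              cs.length x < cs.length (x * cs.simple b')},
            ((-1 : ℤ) ^ cs.length x) • (x • v b'))))) ∧
    (∀ f g : W → V, (∀ x y : W, f (x * y) = f x + x • f y) →
      (∀ x y : W, g (x * y) = g x + x • g y) →
      (∀ b : B, f (cs.simple b) = g (cs.simple b)) → f = g) ∧
    (∀ f : W → V, (∀ x y : W, f (x * y) = f x + x • f y) →
      (∀ b : B, f (cs.simple b) = v b) →
      ((∃ m : V, ∀ w : W, f w = w • m - m) ↔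
       (∃ m : V, ∀ b : B, v b = m - cs.simple b • m))) := by
  classical
  have uniq : ∀ f g : W → V, (∀ x y : W, f (x * y) = f x + x • f y) →
      (∀ x y : W, g (x * y) = g x + x • g y) →
      (∀ b : B, f (cs.simple b) = g (cs.simple b)) → f = g :=
    fun f g hf hg h => CocycleCriterionAux.cocycle_unique cs hf hg h
  refine ⟨⟨?_, ?_⟩, uniq, ?_⟩
  · -- forward direction of (1)
    rintro ⟨f, hf, hfs⟩
    constructor
    · intro b
      have h1 := hf (cs.simple b) (cs.simple b)
      rw [cs.simple_mul_simple_self, CocycleCriterionAux.cocycle_one hf] at h1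
      rw [← hfs b]
      exact h1.symm
    · intro b b' hne hfin
      simp only [← hfs]
      rw [CocycleCriterionAux.finsum_ascent_of_cocycle cs _ hfin b
          (Subgroup.subset_closure (by simp)) f hf,
        CocycleCriterionAux.finsum_ascent_of_cocycle cs _ hfin b'
          (Subgroup.subset_closure (by simp)) f hf]
  · -- backward direction of (1)
    rintro ⟨hi, hii⟩
    have hlift := CocycleCriterionAux.main_liftable cs v hi hii
    set ψ := cs.lift ⟨_, hlift⟩ with hψ
    have hsnd : ∀ w : W, (ψ w).snd = w := by
      have h : (CocycleCriterionAux.Ext.proj).comp ψ = MonoidHom.id W := by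
        apply cs.ext_simple
        intro j
        rw [MonoidHom.comp_apply, hψ, cs.lift_apply_simple]
        rfl
      intro w
      exact DFunLike.congr_fun h w
    refine ⟨fun w => (ψ w).fst, ?_, ?_⟩
    · intro g h
      show (ψ (g * h)).fst = (ψ g).fst + g • (ψ h).fst
      have h2 := congrArg CocycleCriterionAux.Ext.fst (map_mul ψ g h)
      rw [CocycleCriterionAux.Ext.fst_mul, hsnd] at h2
      exact h2
    · intro b
      show (ψ (cs.simple b)).fst = v b
      rw [hψ, cs.lift_apply_simple]
  · -- part (3)
    intro f hf hfs
    constructor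
    · rintro ⟨m, hm⟩
      refine ⟨-m, fun b => ?_⟩
      rw [← hfs b, hm, smul_neg]
      abel
    · rintro ⟨m, hm⟩
      have hg : ∀ x y : W, (fun w => w • (-m) - (-m)) (x * y)
          = (fun w => w • (-m) - (-m)) x + x • ((fun w => w • (-m) - (-m)) y) := by
        intro x y
        show (x * y) • (-m) - (-m) = (x • (-m) - (-m)) + x • (y • (-m) - (-m))
        rw [smul_sub, mul_smul]
        abel
      have heq := uniq f (fun w => w • (-m) - (-m)) hf hg (fun b => by
        show f (cs.simple b) = cs.simple b • (-m) - (-m)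
        rw [hfs b, hm b, smul_neg]
        abel)
      exact ⟨-m, fun w => by rw [heq]⟩
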